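/- Martingale coboundary decomposition with sup-norm error O(n^{1/q+ε}). In the setting of the corrector bounds (effective rates, F_ω = sup_x|f_ω(x)| ∈ L^q(ℙ), μ_ω(f_ω) = 0 a.s., and χ_{ω,n} = Σ_{s>n} R_{θ^n ω, s−n} f_{θ^s ω}), fix ω in the full-measure set where the rates hold and let (X_{ω,j})_{j≥0} be the Markov chain with initial law μ_ω and transition kernel R_{θ^j ω} from time j to time j+1. Define, for n ≥ 1, M_{ω,n} = f_{θ^n ω}(X_{ω,n}) + χ_{ω,n}(X_{ω,n}) − χ_{ω,n−1}(X_{ω,n−1}). Then (M_{ω,n})_{n≥1} is a martingale-difference sequence with respect to the filtration σ(X_{ω,0},…,X_{ω,n}), and for every ε > 0, for ℙ-a.e. ω there is a finite constant C_ω such that for all n ≥ 1, almost surely |S_n^ω f − Σ_{j=1}^{n−1} M_{ω,j}| ≤ C_ω n^{1/q + ε}, where S_n^ω f = Σ_{j=0}^{n−1} f_{θ^j ω}(X_{ω,j}). -/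

import Mathlib

set_option linter.unusedSectionVars false
set_option maxHeartbeats 1000000


open MeasureTheory ProbabilityTheory Filter
open scoped ENNReal NNReal

noncomputable section

variable {𝒴 X : Type*} [MeasurableSpace 𝒴] [MeasurableSpace X]

/-- The left shift `θ` on `Ω = 𝒴^ℤ`. -/
def shift (ω : ℤ → 𝒴) : ℤ → 𝒴 := fun n => ω (n + 1)

/-- `θ^{-n} ω`. -/
def shiftBack (n : ℕ) (ω : ℤ → 𝒴) : ℤ → 𝒴 := fun s => ω (s - n)

/-- The σ-algebra `F_S` generated by the coordinate maps `ω ↦ ω s`, `s ∈ S`. -/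
def coordSigma (𝒴 : Type*) [m𝒴 : MeasurableSpace 𝒴] (S : Set ℤ) :
    MeasurableSpace (ℤ → 𝒴) :=
  ⨆ s ∈ S, m𝒴.comap fun ω => ω s

/-- The upper ψ-mixing coefficients `ψ_U(n)`. -/
def psiU (P : Measure (ℤ → 𝒴)) (n : ℕ) : ℝ :=
  sSup { r : ℝ | ∃ k : ℤ, ∃ A B : Set (ℤ → 𝒴),
    MeasurableSet[coordSigma 𝒴 {s | s ≤ k}] A ∧
    MeasurableSet[coordSigma 𝒴 {s | k + n ≤ s}] B ∧
    0 < (P A).toReal * (P B).toReal ∧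
    r = (P (A ∩ B)).toReal / ((P A).toReal * (P B).toReal) - 1 }

/-- The `n`-step kernel composition `R_{ω,n} = R_{ω_0} ∘ R_{ω_1} ∘ ⋯ ∘ R_{ω_{n-1}}`. -/
def Rcomp (R : 𝒴 → Kernel X X) : ℕ → (ℤ → 𝒴) → Kernel X X
  | 0, _ => Kernel.id
  | n + 1, ω => (Rcomp R n (shift ω)) ∘ₖ R (ω 0)

/-- `‖κ − μ‖_∞`: the supremum over measurable `g` with `sup|g| ≤ 1` and over `x`
of `|κ g (x) − μ(g)|`. -/
def opDist (κ : Kernel X X) (μ : Measure X) : ℝ :=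
  sSup { r : ℝ | ∃ g : X → ℝ, Measurable g ∧ (∀ x, |g x| ≤ 1) ∧
    ∃ x : X, r = |(∫ y, g y ∂(κ x)) - ∫ y, g y ∂μ| }

/-- The random Doeblin condition: ℙ-a.s.,
`R_{θ^{-n_ω}ω, n_ω}(x, Γ) ≥ γ_ω m_ω(Γ)` for all `x` and all measurable `Γ`. -/
def Doeblin (P : Measure (ℤ → 𝒴)) (R : 𝒴 → Kernel X X)
    (nD : (ℤ → 𝒴) → ℕ) (γ : (ℤ → 𝒴) → ℝ) (m : (ℤ → 𝒴) → Measure X) : Prop :=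
  ∀ᵐ ω ∂P, ∀ x : X, ∀ Γ : Set X, MeasurableSet Γ →
    ENNReal.ofReal (γ ω) * m ω Γ ≤ Rcomp R (nD ω) (shiftBack (nD ω) ω) x Γ

/-- Equivariance `(R_ω)^* μ_ω = μ_{θ ω}`, ℙ-a.s. -/
def Equivariant (P : Measure (ℤ → 𝒴)) (R : 𝒴 → Kernel X X)
    (μ : (ℤ → 𝒴) → Measure X) : Prop :=
  ∀ᵐ ω ∂P, ∀ Γ : Set X, MeasurableSet Γ →
    μ (shift ω) Γ = ∫⁻ x, R (ω 0) x Γ ∂(μ ω)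

/-- The effective geometric ergodicity rates for a given random variable `K` and
exponent `p`: ℙ-a.s., for all `n`,
`max(‖R_{θ^{-n}ω,n} − μ_ω‖_∞, ‖R_{ω,n} − μ_{θ^n ω}‖_∞) ≤ K(ω) ρ^{n/p}`. -/
def RateFor (P : Measure (ℤ → 𝒴)) (R : 𝒴 → Kernel X X)
    (μ : (ℤ → 𝒴) → Measure X) (ρ p : ℝ) (K : (ℤ → 𝒴) → ℝ) : Prop :=
  ∀ᵐ ω ∂P, ∀ n : ℕ,
    max (opDist (Rcomp R n (shiftBack n ω)) (μ ω))
        (opDist (Rcomp R n ω) (μ (shift^[n] ω))) ≤ K ω * ρ ^ ((n : ℝ) / p)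

/-- Effective rates: for every finite `p ≥ 1` there is `K_p ∈ L^p(ℙ)`
realizing the exponential rates with exponent `ρ^{n/p}`. -/
def EffectiveRates (P : Measure (ℤ → 𝒴)) (R : 𝒴 → Kernel X X)
    (μ : (ℤ → 𝒴) → Measure X) (ρ : ℝ) : Prop :=
  ∀ p : ℝ, 1 ≤ p → ∃ K : (ℤ → 𝒴) → ℝ,
    MemLp K (ENNReal.ofReal p) P ∧ RateFor P R μ ρ p K

/-- The corrector `χ_{ω,n}(x) = Σ_{s=n+1}^∞ (R_{θ^n ω, s-n} f_{θ^s ω})(x)`. -/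
def corrector (R : 𝒴 → Kernel X X) (f : (ℤ → 𝒴) × X → ℝ)
    (ω : ℤ → 𝒴) (n : ℕ) (x : X) : ℝ :=
  ∑' k : ℕ, ∫ y, f (shift^[n + 1 + k] ω, y) ∂((Rcomp R (k + 1) (shift^[n] ω)) x)

/-- The filtration `σ(X_0, …, X_j)` generated by a process. -/
def chainFilt {Ω' X : Type*} [MeasurableSpace X] (Xc : ℕ → Ω' → X) (j : ℕ) :
    MeasurableSpace Ω' :=
  ⨆ i ∈ Set.Iic j, MeasurableSpace.comap (Xc i) inferInstance

lemma shift_iterate_apply (ω : ℤ → 𝒴) (n : ℕ) (s : ℤ) : shift^[n] ω s = ω (s + n) := by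
  induction n generalizing ω s with
  | zero => simp
  | succ n ih =>
    rw [Function.iterate_succ_apply, ih (shift ω) s]
    simp [shift]; ring_nf

lemma shift_iterate_add (ω : ℤ → 𝒴) (a b : ℕ) : shift^[a] (shift^[b] ω) = shift^[a+b] ω := by
  rw [← Function.iterate_add_apply]

instance RcompMarkov (R : 𝒴 → Kernel X X) [∀ y, IsMarkovKernel (R y)] (n : ℕ) (ω : ℤ → 𝒴) :
    IsMarkovKernel (Rcomp R n ω) := by
  induction n generalizing ω with
  | zero => rw [Rcomp]; infer_instance
  | succ n ih => rw [Rcomp]; have := ih (shift ω); exact Kernel.IsMarkovKernel.comp _ _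

lemma integrable_of_bdd {α : Type*} [MeasurableSpace α] {ν : Measure α} [IsFiniteMeasure ν]
    {g : α → ℝ} (hg : Measurable g)
    {c : ℝ} (hc : ∀ y, |g y| ≤ c) : Integrable g ν :=
  Integrable.mono' (integrable_const c) hg.aestronglyMeasurable
    (ae_of_all _ fun y => by simpa using hc y)

lemma abs_integral_le_of_bdd {α : Type*} [MeasurableSpace α] {ν : Measure α}
    [IsProbabilityMeasure ν] {g : α → ℝ}
    (hg : Measurable g) {c : ℝ} (hc : ∀ y, |g y| ≤ c) : |∫ y, g y ∂ν| ≤ c := by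
  calc |∫ y, g y ∂ν| ≤ ∫ y, |g y| ∂ν := by simpa using norm_integral_le_integral_norm (μ := ν) g
  _ ≤ ∫ _, c ∂ν := integral_mono (integrable_of_bdd hg hc).abs (integrable_const c) hc
  _ = c := by simp

lemma lint_ne_top {α : Type*} [MeasurableSpace α] {ν : Measure α} [IsProbabilityMeasure ν]
    {g : α → ℝ} {c : ℝ}
    (hc : ∀ y, |g y| ≤ c) : ∫⁻ y, ENNReal.ofReal (g y) ∂ν ≠ ⊤ := by
  refine ne_of_lt (lt_of_le_of_lt (lintegral_mono (g := fun _ => ENNReal.ofReal c) ?_) ?_)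
  · intro y; exact ENNReal.ofReal_le_ofReal ((le_abs_self _).trans (hc y))
  · simp [lintegral_const]

lemma integral_comp_bdd_nonneg (η κ : Kernel X X) [IsMarkovKernel η] [IsMarkovKernel κ]
    (x : X) {g : X → ℝ} (hg : Measurable g) {c : ℝ} (hc : ∀ y, |g y| ≤ c)
    (h0 : ∀ y, 0 ≤ g y) :
    ∫ z, g z ∂(η ∘ₖ κ) x = ∫ y, ∫ z, g z ∂η y ∂κ x := by
  have hmeas : Measurable fun y => ∫⁻ z, ENNReal.ofReal (g z) ∂η y :=
    Measurable.lintegral_kernel (hg.ennreal_ofReal)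
  have h1 : ∫ z, g z ∂(η ∘ₖ κ) x = (∫⁻ z, ENNReal.ofReal (g z) ∂(η ∘ₖ κ) x).toReal := by
    rw [integral_eq_lintegral_of_nonneg_ae (ae_of_all _ h0) hg.aestronglyMeasurable]
  rw [h1, Kernel.lintegral_comp _ _ _ hg.ennreal_ofReal]
  have h2 : ∀ y, ∫ z, g z ∂η y = (∫⁻ z, ENNReal.ofReal (g z) ∂η y).toReal := fun y => by
    rw [integral_eq_lintegral_of_nonneg_ae (ae_of_all _ h0) hg.aestronglyMeasurable]
  simp_rw [h2]
  rw [integral_toReal hmeas.aemeasurable]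
  exact ae_of_all _ fun y => lt_of_le_of_ne le_top (lint_ne_top hc)

lemma integral_comp_bdd (η κ : Kernel X X) [IsMarkovKernel η] [IsMarkovKernel κ]
    (x : X) {g : X → ℝ} (hg : Measurable g) {c : ℝ} (hc : ∀ y, |g y| ≤ c) :
    ∫ z, g z ∂(η ∘ₖ κ) x = ∫ y, ∫ z, g z ∂η y ∂κ x := by
  have hc0 : 0 ≤ c := le_trans (abs_nonneg _) (hc x)
  set g' : X → ℝ := fun y => g y + c with hg'
  have hg'm : Measurable g' := hg.add_const c
  have hg'b : ∀ y, |g' y| ≤ 2 * c := fun y => by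
    have := abs_le.1 (hc y); rw [abs_le]; constructor <;> simp [hg'] <;> linarith [this.1, this.2]
  have hg'0 : ∀ y, 0 ≤ g' y := fun y => by have := abs_le.1 (hc y); simp [hg']; linarith [this.1]
  have key := integral_comp_bdd_nonneg η κ x hg'm hg'b hg'0
  have hsplit : ∀ (ν : Measure X), IsProbabilityMeasure ν →
      ∫ z, g' z ∂ν = (∫ z, g z ∂ν) + c := by
    intro ν hν
    rw [integral_add (integrable_of_bdd hg hc) (integrable_const c)]
    simp
  have hinnm : Measurable fun y => ∫ z, g z ∂η y :=
    (StronglyMeasurable.integral_kernel_prod_right'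
      (κ := η) (f := fun p : X × X => g p.2)
      (hg.comp measurable_snd).stronglyMeasurable).measurable
  have hinnb : ∀ y, |∫ z, g z ∂η y| ≤ c := fun y => abs_integral_le_of_bdd hg hc
  rw [hsplit _ inferInstance] at key
  simp_rw [hsplit _ inferInstance] at key
  rw [integral_add (integrable_of_bdd hinnm hinnb) (integrable_const c)] at key
  simp only [integral_const, measure_univ, ENNReal.toReal_one, smul_eq_mul, one_mul, probReal_univ] at key
  linarith

lemma term_measurable (R : 𝒴 → Kernel X X) [∀ y, IsMarkovKernel (R y)]
    (f : (ℤ → 𝒴) × X → ℝ) (hf : Measurable f) (ω : ℤ → 𝒴) (n k : ℕ) :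
    Measurable fun x => ∫ y, f (shift^[n+1+k] ω, y) ∂((Rcomp R (k+1) (shift^[n] ω)) x) :=
  (StronglyMeasurable.integral_kernel_prod_right' (κ := Rcomp R (k+1) (shift^[n] ω))
    (f := fun p : X × X => f (shift^[n+1+k] ω, p.2))
    ((hf.comp measurable_prodMk_left).comp measurable_snd).stronglyMeasurable).measurable

lemma term_summable (R : 𝒴 → Kernel X X) [∀ y, IsMarkovKernel (R y)]
    (f : (ℤ → 𝒴) × X → ℝ) (ω : ℤ → 𝒴) (b : ℕ → ℕ → ℝ)
    (hb : ∀ n k x, |∫ y, f (shift^[n+1+k] ω, y) ∂((Rcomp R (k+1) (shift^[n] ω)) x)| ≤ b n k)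
    (hbs : ∀ n, Summable (b n)) (n : ℕ) (x : X) :
    Summable fun k => ∫ y, f (shift^[n+1+k] ω, y) ∂((Rcomp R (k+1) (shift^[n] ω)) x) :=
  Summable.of_norm_bounded (hbs n) fun k => by
    simpa [Real.norm_eq_abs] using hb n k x

lemma corrector_measurable (R : 𝒴 → Kernel X X) [∀ y, IsMarkovKernel (R y)]
    (f : (ℤ → 𝒴) × X → ℝ) (hf : Measurable f) (ω : ℤ → 𝒴) (b : ℕ → ℕ → ℝ)
    (hb : ∀ n k x, |∫ y, f (shift^[n+1+k] ω, y) ∂((Rcomp R (k+1) (shift^[n] ω)) x)| ≤ b n k)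
    (hbs : ∀ n, Summable (b n)) (n : ℕ) : Measurable (corrector R f ω n) := by
  apply measurable_of_tendsto_metrizable'
    (f := fun N x => ∑ k ∈ Finset.range N,
      ∫ y, f (shift^[n+1+k] ω, y) ∂((Rcomp R (k+1) (shift^[n] ω)) x)) atTop
  · exact fun N => Finset.measurable_sum _ fun k _ => term_measurable R f hf ω n k
  · rw [tendsto_pi_nhds]
    exact fun x => (term_summable R f ω b hb hbs n x).hasSum.tendsto_sum_nat

lemma corrector_abs_le (R : 𝒴 → Kernel X X) [∀ y, IsMarkovKernel (R y)]
    (f : (ℤ → 𝒴) × X → ℝ) (ω : ℤ → 𝒴) (b : ℕ → ℕ → ℝ)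
    (hb : ∀ n k x, |∫ y, f (shift^[n+1+k] ω, y) ∂((Rcomp R (k+1) (shift^[n] ω)) x)| ≤ b n k)
    (hbs : ∀ n, Summable (b n)) (n : ℕ) (x : X) :
    |corrector R f ω n x| ≤ ∑' k, b n k := by
  have h1 : Summable fun k =>
      |∫ y, f (shift^[n+1+k] ω, y) ∂((Rcomp R (k+1) (shift^[n] ω)) x)| :=
    (term_summable R f ω b hb hbs n x).abs
  calc |corrector R f ω n x|
      ≤ ∑' k, |∫ y, f (shift^[n+1+k] ω, y) ∂((Rcomp R (k+1) (shift^[n] ω)) x)| := by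
        simpa [Real.norm_eq_abs, corrector] using
          norm_tsum_le_tsum_norm (f := fun k =>
            ∫ y, f (shift^[n+1+k] ω, y) ∂((Rcomp R (k+1) (shift^[n] ω)) x))
            (by simpa [Real.norm_eq_abs] using h1)
  _ ≤ ∑' k, b n k := Summable.tsum_le_tsum (fun k => hb n k x) h1 (hbs n)



lemma corrector_identity (R : 𝒴 → Kernel X X) [∀ y, IsMarkovKernel (R y)]
    (f : (ℤ → 𝒴) × X → ℝ) (hf : Measurable f) (ω : ℤ → 𝒴) (F : (ℤ → 𝒴) → ℝ)
    (hFb : ∀ (m : ℕ) y, |f (shift^[m] ω, y)| ≤ F (shift^[m] ω))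
    (b : ℕ → ℕ → ℝ)
    (hb : ∀ n k x, |∫ y, f (shift^[n+1+k] ω, y) ∂((Rcomp R (k+1) (shift^[n] ω)) x)| ≤ b n k)
    (hbs : ∀ n, Summable (b n)) (n : ℕ) (x : X) :
    corrector R f ω n x
      = ∫ y, (f (shift^[n+1] ω, y) + corrector R f ω (n+1) y) ∂(R (ω n) x) := by
  have hshift0 : (shift^[n] ω) 0 = ω n := by
    rw [shift_iterate_apply]; norm_num
  have hR1 : Rcomp R 1 (shift^[n] ω) = R (ω n) := by
    show Rcomp R 0 (shift (shift^[n] ω)) ∘ₖ R ((shift^[n] ω) 0) = R (ω n)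
    rw [hshift0]
    show Kernel.id ∘ₖ R (ω n) = R (ω n)
    exact Kernel.id_comp _
  have hRsucc : ∀ k : ℕ,
      Rcomp R (k+2) (shift^[n] ω) = Rcomp R (k+1) (shift^[n+1] ω) ∘ₖ R (ω n) := by
    intro k
    show Rcomp R (k+1) (shift (shift^[n] ω)) ∘ₖ R ((shift^[n] ω) 0) = _
    rw [hshift0, ← Function.iterate_succ_apply' shift n ω]
  have hT1 : ∀ (k : ℕ) (y : X), |∫ z, f (shift^[(n+1)+1+k] ω, z)
      ∂((Rcomp R (k+1) (shift^[n+1] ω)) y)| ≤ b (n+1) k := fun k y => hb (n+1) k y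
  have hTm : ∀ k : ℕ, Measurable fun y =>
      ∫ z, f (shift^[(n+1)+1+k] ω, z) ∂((Rcomp R (k+1) (shift^[n+1] ω)) y) :=
    fun k => term_measurable R f hf ω (n+1) k
  have htail : ∀ k : ℕ,
      (∫ y, f (shift^[n+1+(k+1)] ω, y) ∂((Rcomp R (k+1+1) (shift^[n] ω)) x))
        = ∫ y, (∫ z, f (shift^[(n+1)+1+k] ω, z) ∂((Rcomp R (k+1) (shift^[n+1] ω)) y))
            ∂(R (ω n) x) := by
    intro k
    have hidx : n+1+(k+1) = (n+1)+1+k := by omega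
    rw [hidx, hRsucc k]
    exact integral_comp_bdd _ _ x (hf.comp measurable_prodMk_left)
      (fun z => hFb ((n+1)+1+k) z)
  have hswap :
      (∑' k : ℕ, ∫ y, (∫ z, f (shift^[(n+1)+1+k] ω, z)
          ∂((Rcomp R (k+1) (shift^[n+1] ω)) y)) ∂(R (ω n) x))
        = ∫ y, corrector R f ω (n+1) y ∂(R (ω n) x) := by
    simp only [corrector]
    have hsum : Summable fun k : ℕ => ∫ y, ‖∫ z, f (shift^[(n+1)+1+k] ω, z)
        ∂((Rcomp R (k+1) (shift^[n+1] ω)) y)‖ ∂(R (ω n) x) := by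
      refine Summable.of_nonneg_of_le (fun k => integral_nonneg fun y => norm_nonneg _)
        (fun k => ?_) (hbs (n+1))
      calc ∫ y, ‖∫ z, f (shift^[(n+1)+1+k] ω, z) ∂((Rcomp R (k+1) (shift^[n+1] ω)) y)‖
            ∂(R (ω n) x)
          ≤ ∫ _, b (n+1) k ∂(R (ω n) x) := by
            refine integral_mono (integrable_of_bdd (hTm k) (hT1 k)).norm
              (integrable_const _) fun y => ?_
            simpa [Real.norm_eq_abs] using hT1 k y
      _ = b (n+1) k := by simp
    exact (integral_tsum_of_summable_integral_norm (μ := R (ω n) x)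
      (F := fun (k : ℕ) (y : X) => ∫ z, f (shift^[(n+1)+1+k] ω, z)
        ∂((Rcomp R (k+1) (shift^[n+1] ω)) y))
      (fun k => integrable_of_bdd (hTm k) (hT1 k)) hsum)
  simp only [corrector]
  rw [(term_summable R f ω b hb hbs n x).tsum_eq_zero_add]
  simp_rw [htail]
  rw [hswap]
  have h0 : (∫ y, f (shift^[n+1+0] ω, y) ∂((Rcomp R (0+1) (shift^[n] ω)) x))
      = ∫ y, f (shift^[n+1] ω, y) ∂(R (ω n) x) := by
    norm_num [hR1]
  rw [h0]
  refine (integral_add (integrable_of_bdd (hf.comp measurable_prodMk_left) (hFb (n+1)))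
    (integrable_of_bdd (corrector_measurable R f hf ω b hb hbs (n+1))
      (fun y => corrector_abs_le R f ω b hb hbs (n+1) y))).symm



lemma markov_lint {Ω' : Type} [m' : MeasurableSpace Ω'] (P' : Measure Ω')
    [IsProbabilityMeasure P'] (Xc : ℕ → Ω' → X) (hXc : ∀ j, Measurable (Xc j))
    (κ : Kernel X X) [IsMarkovKernel κ] (j : ℕ)
    (hM : ∀ B : Set Ω', MeasurableSet[chainFilt Xc j] B → ∀ Γ : Set X, MeasurableSet Γ →
      P' (B ∩ Xc (j+1) ⁻¹' Γ) = ∫⁻ a in B, κ (Xc j a) Γ ∂P')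
    {B : Set Ω'} (hB : MeasurableSet[chainFilt Xc j] B)
    (g : X → ℝ≥0∞) (hg : Measurable g) :
    ∫⁻ a in B, g (Xc (j+1) a) ∂P' = ∫⁻ a in B, ∫⁻ y, g y ∂κ (Xc j a) ∂P' := by
  refine Measurable.ennreal_induction (motive := fun g =>
    ∫⁻ a in B, g (Xc (j+1) a) ∂P' = ∫⁻ a in B, ∫⁻ y, g y ∂κ (Xc j a) ∂P') ?_ ?_ ?_ hg
  · intro c s hs
    have h1 : (fun a => (s.indicator fun _ => c) (Xc (j+1) a))
        = (Xc (j+1) ⁻¹' s).indicator (fun _ => c) := by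
      ext a; by_cases hx : Xc (j+1) a ∈ s <;> simp [hx]
    calc ∫⁻ a in B, (s.indicator fun _ => c) (Xc (j+1) a) ∂P'
        = c * (P'.restrict B) (Xc (j+1) ⁻¹' s) := by
          rw [show (fun a => (s.indicator fun _ => c) (Xc (j+1) a))
            = (Xc (j+1) ⁻¹' s).indicator (fun _ => c) from h1]
          exact lintegral_indicator_const ((hXc (j+1)) hs) c
    _ = c * P' (B ∩ Xc (j+1) ⁻¹' s) := by
          rw [Measure.restrict_apply ((hXc (j+1)) hs), Set.inter_comm]
    _ = c * ∫⁻ a in B, κ (Xc j a) s ∂P' := by rw [hM B hB s hs]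
    _ = ∫⁻ a in B, c * κ (Xc j a) s ∂P' := by
          have hmA : Measurable fun a => κ (Xc j a) s :=
            (Kernel.measurable_coe κ hs).comp (hXc j)
          exact (lintegral_const_mul c hmA).symm
    _ = ∫⁻ a in B, ∫⁻ y, (s.indicator fun _ => c) y ∂κ (Xc j a) ∂P' := by
          refine lintegral_congr fun a => ?_
          rw [lintegral_indicator_const hs c]
  · intro f1 f2 _ hm1 hm2 h1 h2
    have hmA : Measurable fun a => ∫⁻ y, f1 y ∂κ (Xc j a) :=
      (Measurable.lintegral_kernel hm1).comp (hXc j)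
    have hmB : Measurable fun a => f1 (Xc (j+1) a) := hm1.comp (hXc (j+1))
    calc ∫⁻ a in B, (f1 + f2) (Xc (j+1) a) ∂P'
        = ∫⁻ a in B, (f1 (Xc (j+1) a) + f2 (Xc (j+1) a)) ∂P' := rfl
    _ = (∫⁻ a in B, f1 (Xc (j+1) a) ∂P') + ∫⁻ a in B, f2 (Xc (j+1) a) ∂P' :=
          lintegral_add_left hmB _
    _ = (∫⁻ a in B, ∫⁻ y, f1 y ∂κ (Xc j a) ∂P')
          + ∫⁻ a in B, ∫⁻ y, f2 y ∂κ (Xc j a) ∂P' := by rw [h1, h2]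
    _ = ∫⁻ a in B, ((∫⁻ y, f1 y ∂κ (Xc j a)) + ∫⁻ y, f2 y ∂κ (Xc j a)) ∂P' :=
          (lintegral_add_left hmA _).symm
    _ = ∫⁻ a in B, ∫⁻ y, (f1 + f2) y ∂κ (Xc j a) ∂P' := by
          refine lintegral_congr fun a => ?_
          exact (lintegral_add_left hm1 _).symm
  · intro fs hmeas hmono hPs
    have goal2 : ∫⁻ a in B, ⨆ n, fs n (Xc (j+1) a) ∂P'
        = ∫⁻ a in B, ∫⁻ y, ⨆ n, fs n y ∂κ (Xc j a) ∂P' := by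
      calc ∫⁻ a in B, ⨆ n, fs n (Xc (j+1) a) ∂P'
          = ⨆ n, ∫⁻ a in B, fs n (Xc (j+1) a) ∂P' := by
            refine lintegral_iSup (fun n => (hmeas n).comp (hXc (j+1)))
              (fun i k hik a => hmono hik _)
      _ = ⨆ n, ∫⁻ a in B, ∫⁻ y, fs n y ∂κ (Xc j a) ∂P' := iSup_congr hPs
      _ = ∫⁻ a in B, ⨆ n, ∫⁻ y, fs n y ∂κ (Xc j a) ∂P' := by
            have hmA : ∀ n, Measurable fun a => ∫⁻ y, fs n y ∂κ (Xc j a) :=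
              fun n => (Measurable.lintegral_kernel (hmeas n)).comp (hXc j)
            exact (lintegral_iSup hmA
              (fun i k hik a => lintegral_mono fun y => hmono hik y)).symm
      _ = ∫⁻ a in B, ∫⁻ y, ⨆ n, fs n y ∂κ (Xc j a) ∂P' := by
            refine lintegral_congr fun a => ?_
            exact (lintegral_iSup hmeas hmono).symm
    simpa [iSup_apply] using goal2

lemma markov_real_nonneg {Ω' : Type} [m' : MeasurableSpace Ω'] (P' : Measure Ω')
    [IsProbabilityMeasure P'] (Xc : ℕ → Ω' → X) (hXc : ∀ j, Measurable (Xc j))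
    (κ : Kernel X X) [IsMarkovKernel κ] (j : ℕ)
    (hM : ∀ B : Set Ω', MeasurableSet[chainFilt Xc j] B → ∀ Γ : Set X, MeasurableSet Γ →
      P' (B ∩ Xc (j+1) ⁻¹' Γ) = ∫⁻ a in B, κ (Xc j a) Γ ∂P')
    {B : Set Ω'} (hB : MeasurableSet[chainFilt Xc j] B)
    (h : X → ℝ) (hh : Measurable h) {c : ℝ} (hc : ∀ x, |h x| ≤ c) (h0 : ∀ x, 0 ≤ h x) :
    ∫ a in B, h (Xc (j+1) a) ∂P' = ∫ a in B, (∫ y, h y ∂κ (Xc j a)) ∂P' := by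
  have key := markov_lint P' Xc hXc κ j hM hB (fun y => ENNReal.ofReal (h y)) hh.ennreal_ofReal
  have l1 : ∫ a in B, h (Xc (j+1) a) ∂P'
      = (∫⁻ a in B, ENNReal.ofReal (h (Xc (j+1) a)) ∂P').toReal := by
    rw [integral_eq_lintegral_of_nonneg_ae (ae_of_all _ fun a => h0 _)
      ((hh.comp (hXc (j+1))).aestronglyMeasurable)]
  have l2 : ∀ a, ∫ y, h y ∂κ (Xc j a) = (∫⁻ y, ENNReal.ofReal (h y) ∂κ (Xc j a)).toReal :=
    fun a => integral_eq_lintegral_of_nonneg_ae (ae_of_all _ h0) hh.aestronglyMeasurable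
  have hmA : Measurable fun a => ∫⁻ y, ENNReal.ofReal (h y) ∂κ (Xc j a) :=
    (Measurable.lintegral_kernel hh.ennreal_ofReal).comp (hXc j)
  rw [l1, key]
  simp_rw [l2]
  exact (integral_toReal hmA.aemeasurable
    (ae_of_all _ fun a => lt_of_le_of_ne le_top (lint_ne_top hc))).symm

lemma markov_real {Ω' : Type} [m' : MeasurableSpace Ω'] (P' : Measure Ω')
    [IsProbabilityMeasure P'] (Xc : ℕ → Ω' → X) (hXc : ∀ j, Measurable (Xc j))
    (κ : Kernel X X) [IsMarkovKernel κ] (j : ℕ)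
    (hM : ∀ B : Set Ω', MeasurableSet[chainFilt Xc j] B → ∀ Γ : Set X, MeasurableSet Γ →
      P' (B ∩ Xc (j+1) ⁻¹' Γ) = ∫⁻ a in B, κ (Xc j a) Γ ∂P')
    {B : Set Ω'} (hB : MeasurableSet[chainFilt Xc j] B)
    (h : X → ℝ) (hh : Measurable h) {c : ℝ} (hc : ∀ x, |h x| ≤ c) :
    ∫ a in B, h (Xc (j+1) a) ∂P' = ∫ a in B, (∫ y, h y ∂κ (Xc j a)) ∂P' := by
  have hΩ : Nonempty Ω' := by
    by_contra hne
    have he : (Set.univ : Set Ω') = ∅ := Set.univ_eq_empty_iff.2 (not_nonempty_iff.1 hne)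
    have h1 := measure_univ (μ := P')
    rw [he] at h1; simp at h1
  have hc0 : 0 ≤ c := le_trans (abs_nonneg _) (hc (Xc j (Classical.choice hΩ)))
  have hb2 : ∀ x, |h x + c| ≤ 2 * c := fun x => by
    have := abs_le.1 (hc x); rw [abs_le]; constructor <;> linarith [this.1, this.2]
  have h02 : ∀ x, 0 ≤ h x + c := fun x => by have := abs_le.1 (hc x); linarith [this.1]
  have key := markov_real_nonneg P' Xc hXc κ j hM hB (fun x => h x + c)
    (hh.add_const c) hb2 h02
  have hBm : MeasurableSet B := by
    have hle : chainFilt Xc j ≤ m' := by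
      refine iSup_le fun i => iSup_le fun _ => ?_
      exact MeasurableSpace.comap_le_iff_le_map.2 fun s hs => (hXc i) hs
    exact hle _ hB
  have hinm : Measurable fun a => ∫ y, h y ∂κ (Xc j a) :=
    ((StronglyMeasurable.integral_kernel_prod_right' (κ := κ)
      (f := fun p : X × X => h p.2)
      ((hh.comp measurable_snd).stronglyMeasurable)).measurable).comp (hXc j)
  have hinb : ∀ a, |∫ y, h y ∂κ (Xc j a)| ≤ c := fun a => abs_integral_le_of_bdd hh hc
  have e1 : ∫ a in B, (h (Xc (j+1) a) + c) ∂P'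
      = (∫ a in B, h (Xc (j+1) a) ∂P') + ∫ _ in B, c ∂P' :=
    integral_add (integrable_of_bdd (hh.comp (hXc (j+1))) (fun a => hc _)) (integrable_const c)
  have e2 : ∀ a, ∫ y, (h y + c) ∂κ (Xc j a) = (∫ y, h y ∂κ (Xc j a)) + c := fun a => by
    rw [integral_add (integrable_of_bdd hh hc) (integrable_const c)]
    simp
  have e3 : ∫ a in B, ((∫ y, h y ∂κ (Xc j a)) + c) ∂P'
      = (∫ a in B, (∫ y, h y ∂κ (Xc j a)) ∂P') + ∫ _ in B, c ∂P' :=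
    integral_add (integrable_of_bdd hinm hinb) (integrable_const c)
  simp only [e2] at key
  rw [e1, e3] at key
  linarith



lemma telescope_sum (u v : ℕ → ℝ) (m : ℕ) :
    (∑ j ∈ Finset.range (m+1), u j) - ∑ j ∈ Finset.Icc 1 m, (u j + v j - v (j-1))
      = u 0 + v 0 - v m := by
  induction m with
  | zero => simp
  | succ m ih =>
    rw [Finset.sum_range_succ, Finset.sum_Icc_succ_top (by omega : 1 ≤ m+1)]
    simp only [Nat.add_sub_cancel]
    linarith [ih]

lemma main_aux (R : 𝒴 → Kernel X X) [∀ y, IsMarkovKernel (R y)]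
    (f : (ℤ → 𝒴) × X → ℝ) (hf : Measurable f)
    (ω : ℤ → 𝒴) (F : (ℤ → 𝒴) → ℝ)
    (hFb : ∀ (m : ℕ) y, |f (shift^[m] ω, y)| ≤ F (shift^[m] ω))
    (b : ℕ → ℕ → ℝ)
    (hb : ∀ n k x, |∫ y, f (shift^[n+1+k] ω, y) ∂((Rcomp R (k+1) (shift^[n] ω)) x)| ≤ b n k)
    (hbs : ∀ n, Summable (b n))
    (q : ℝ) (hq : 0 < q)
    (hquant : ∀ ε : ℝ, 0 < ε → ∃ C : ℝ, 0 ≤ C ∧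
      (∀ (n : ℕ) (x : X), |corrector R f ω n x| ≤ C * ((n:ℝ)+1) ^ (1/q + ε)) ∧
      F (shift^[0] ω) ≤ C) :
    ∀ (Ω' : Type) [m' : MeasurableSpace Ω'] (P' : Measure Ω') (Xc : ℕ → Ω' → X),
      IsProbabilityMeasure P' → (∀ j, Measurable (Xc j)) →
      (∀ j : ℕ, ∀ B : Set Ω', MeasurableSet[chainFilt Xc j] B →
        ∀ Γ : Set X, MeasurableSet Γ →
          P' (B ∩ Xc (j + 1) ⁻¹' Γ) = ∫⁻ a in B, R (ω (j : ℤ)) (Xc j a) Γ ∂P') →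
      ((∀ n : ℕ, 1 ≤ n →
          P'[fun a => f (shift^[n] ω, Xc n a) + corrector R f ω n (Xc n a)
              - corrector R f ω (n - 1) (Xc (n - 1) a) | chainFilt Xc (n - 1)]
            =ᵐ[P'] 0) ∧
        ∀ ε : ℝ, 0 < ε → ∃ C : ℝ, ∀ n : ℕ, 1 ≤ n → ∀ᵐ a ∂P',
          |(∑ j ∈ Finset.range n, f (shift^[j] ω, Xc j a)) -
              ∑ j ∈ Finset.Icc 1 (n - 1),
                (f (shift^[j] ω, Xc j a) + corrector R f ω j (Xc j a)
                  - corrector R f ω (j - 1) (Xc (j - 1) a))| ≤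
            C * (n : ℝ) ^ (1 / q + ε)) := by
  intro Ω' m' P' Xc hP' hXc hMar
  constructor
  · -- martingale difference part
    intro n hn
    obtain ⟨j, rfl⟩ : ∃ j, n = j + 1 := ⟨n - 1, by omega⟩
    simp only [Nat.add_sub_cancel]
    set g : X → ℝ := fun x => f (shift^[j+1] ω, x) + corrector R f ω (j+1) x with hg
    have hgm : Measurable g :=
      (hf.comp measurable_prodMk_left).add (corrector_measurable R f hf ω b hb hbs (j+1))
    set cg : ℝ := F (shift^[j+1] ω) + ∑' k, b (j+1) k with hcg
    have hgb : ∀ x, |g x| ≤ cg := fun x =>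
      (abs_add_le _ _).trans (add_le_add (hFb (j+1) x) (corrector_abs_le R f ω b hb hbs (j+1) x))
    have hχm : Measurable (corrector R f ω j) := corrector_measurable R f hf ω b hb hbs j
    have hχb : ∀ x, |corrector R f ω j x| ≤ ∑' k, b j k :=
      fun x => corrector_abs_le R f ω b hb hbs j x
    have hident : ∀ x, corrector R f ω j x = ∫ y, g y ∂(R (ω (j : ℤ)) x) := fun x =>
      corrector_identity R f hf ω F hFb b hb hbs j x
    have hm : chainFilt Xc j ≤ m' := by
      refine iSup_le fun i => iSup_le fun _ => ?_
      exact (hXc i).comap_le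
    set M : Ω' → ℝ := fun a => g (Xc (j+1) a) - corrector R f ω j (Xc j a) with hM
    have hMmeas : Measurable M := (hgm.comp (hXc (j+1))).sub (hχm.comp (hXc j))
    have hMb : ∀ a, |M a| ≤ cg + ∑' k, b j k := fun a =>
      (abs_sub _ _).trans (add_le_add (hgb _) (hχb _))
    have hMint : Integrable M P' := integrable_of_bdd hMmeas hMb
    have key : (0 : Ω' → ℝ) =ᵐ[P'] P'[M | chainFilt Xc j] := by
      refine ae_eq_condExp_of_forall_setIntegral_eq hm hMint
        (fun s _ _ => (integrable_zero _ _ _).integrableOn) (fun s hs _ => ?_)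
        (stronglyMeasurable_const.aestronglyMeasurable)
      have hsm : MeasurableSet s := hm _ hs
      have e1 : ∫ a in s, M a ∂P'
          = (∫ a in s, g (Xc (j+1) a) ∂P') - ∫ a in s, corrector R f ω j (Xc j a) ∂P' :=
        integral_sub (integrable_of_bdd (hgm.comp (hXc (j+1))) (fun a => hgb _)).integrableOn
          (integrable_of_bdd (hχm.comp (hXc j)) (fun a => hχb _)).integrableOn
      have e2 : ∫ a in s, g (Xc (j+1) a) ∂P'
          = ∫ a in s, (∫ y, g y ∂(R (ω (j : ℤ)) (Xc j a))) ∂P' :=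
        markov_real P' Xc hXc (R (ω (j : ℤ))) j (hMar j) hs g hgm hgb
      have e3 : ∫ a in s, (∫ y, g y ∂(R (ω (j : ℤ)) (Xc j a))) ∂P'
          = ∫ a in s, corrector R f ω j (Xc j a) ∂P' := by
        refine integral_congr_ae (ae_of_all _ fun a => ?_)
        exact (hident (Xc j a)).symm
      simp only [Pi.zero_apply, integral_zero]
      rw [e1, e2, e3]
      ring
    exact key.symm
  · -- quantitative part
    intro ε hε
    obtain ⟨C, hC0, hCcor, hCF⟩ := hquant ε hε
    refine ⟨F (shift^[0] ω) + C + C, ?_⟩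
    intro n hn
    refine ae_of_all _ fun a => ?_
    obtain ⟨m, rfl⟩ : ∃ m, n = m + 1 := ⟨n - 1, by omega⟩
    simp only [Nat.add_sub_cancel]
    set u : ℕ → ℝ := fun j => f (shift^[j] ω, Xc j a) with hu
    set v : ℕ → ℝ := fun j => corrector R f ω j (Xc j a) with hv
    have htel := telescope_sum u v m
    set e : ℝ := 1/q + ε with he
    have he0 : 0 ≤ e := by
      have : 0 < 1/q := by positivity
      simp only [he]; linarith
    have hF0 : 0 ≤ F (shift^[0] ω) :=
      le_trans (abs_nonneg _) (hFb 0 (Xc 0 a))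
    have hone : (1:ℝ) ≤ ((m:ℝ)+1) ^ e := by
      calc (1:ℝ) = (1:ℝ) ^ e := (Real.one_rpow e).symm
      _ ≤ ((m:ℝ)+1) ^ e := by
          refine Real.rpow_le_rpow (by norm_num) (by push_cast; linarith [Nat.cast_nonneg (α := ℝ) m]) he0
    have hu0 : |u 0| ≤ F (shift^[0] ω) := hFb 0 _
    have hv0 : |v 0| ≤ C := by
      have := hCcor 0 (Xc 0 a)
      simpa using this
    have hvm : |v m| ≤ C * ((m:ℝ)+1) ^ e := hCcor m (Xc m a)
    have hcast : ((m+1 : ℕ) : ℝ) = (m:ℝ)+1 := by push_cast; ring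
    rw [htel, hcast]
    have habs : |u 0 + v 0 - v m| ≤ |u 0| + |v 0| + |v m| := by
      calc |u 0 + v 0 - v m| ≤ |u 0 + v 0| + |v m| := abs_sub _ _
      _ ≤ |u 0| + |v 0| + |v m| := by linarith [abs_add_le (u 0) (v 0)]
    calc |u 0 + v 0 - v m| ≤ |u 0| + |v 0| + |v m| := habs
    _ ≤ F (shift^[0] ω) + C + C * ((m:ℝ)+1) ^ e := by
        refine add_le_add (add_le_add hu0 hv0) hvm
    _ ≤ (F (shift^[0] ω) + C + C) * ((m:ℝ)+1) ^ e := by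
        have h1 : F (shift^[0] ω) ≤ F (shift^[0] ω) * ((m:ℝ)+1) ^ e := by
          nlinarith
        have h2 : C ≤ C * ((m:ℝ)+1) ^ e := by nlinarith
        have expand : (F (shift^[0] ω) + C + C) * (((m:ℝ)+1) ^ e)
            = F (shift^[0] ω) * (((m:ℝ)+1) ^ e) + C * (((m:ℝ)+1) ^ e)
              + C * (((m:ℝ)+1) ^ e) := by ring
        rw [expand]
        linarith



lemma exists_const_bound {u w : ℕ → ℝ} (hu0 : ∀ j, 0 ≤ u j) (hw : ∀ j, 1 ≤ w j)
    (h : ∀ᶠ j in atTop, u j ≤ w j) : ∃ C, 0 ≤ C ∧ ∀ j, u j ≤ C * w j := by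
  obtain ⟨N, hN⟩ := eventually_atTop.1 h
  refine ⟨1 + ∑ i ∈ Finset.range N, u i, by
    have : 0 ≤ ∑ i ∈ Finset.range N, u i := Finset.sum_nonneg fun i _ => hu0 i
    linarith, fun j => ?_⟩
  have hC1 : (1:ℝ) ≤ 1 + ∑ i ∈ Finset.range N, u i := by
    have : 0 ≤ ∑ i ∈ Finset.range N, u i := Finset.sum_nonneg fun i _ => hu0 i
    linarith
  rcases le_or_gt N j with hj | hj
  · calc u j ≤ w j := hN j hj
    _ = 1 * w j := (one_mul _).symm
    _ ≤ (1 + ∑ i ∈ Finset.range N, u i) * w j := by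
        have := (hw j); nlinarith
  · have hmem : j ∈ Finset.range N := Finset.mem_range.2 hj
    have h1 : u j ≤ ∑ i ∈ Finset.range N, u i :=
      Finset.single_le_sum (fun i _ => hu0 i) hmem
    calc u j ≤ 1 + ∑ i ∈ Finset.range N, u i := by linarith
    _ = (1 + ∑ i ∈ Finset.range N, u i) * 1 := (mul_one _).symm
    _ ≤ (1 + ∑ i ∈ Finset.range N, u i) * w j := by
        have := hw j; nlinarith

lemma one_le_rpow_cast_succ (j : ℕ) (e : ℝ) (he : 0 ≤ e) : (1:ℝ) ≤ ((j:ℝ)+1) ^ e := by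
  calc (1:ℝ) = (1:ℝ) ^ e := (Real.one_rpow e).symm
  _ ≤ ((j:ℝ)+1) ^ e :=
      Real.rpow_le_rpow (by norm_num) (by linarith [Nat.cast_nonneg (α := ℝ) j]) he

lemma orbit_growth (P : Measure (ℤ → 𝒴)) [IsProbabilityMeasure P]
    (hmp : MeasurePreserving shift P P) (G : (ℤ → 𝒴) → ℝ) (p : ℝ) (hp : 0 < p)
    (hG : MemLp G (ENNReal.ofReal p) P) (e : ℝ) (he0 : 0 ≤ e) (he : 1 < p * e) :
    ∀ᵐ ω ∂P, ∃ C, 0 ≤ C ∧ ∀ j : ℕ, |G (shift^[j] ω)| ≤ C * ((j:ℝ)+1) ^ e := by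
  set G' := hG.aestronglyMeasurable.mk G with hG'def
  have hsm : StronglyMeasurable G' := hG.aestronglyMeasurable.stronglyMeasurable_mk
  have heq : G =ᵐ[P] G' := hG.aestronglyMeasurable.ae_eq_mk
  have hG' : MemLp G' (ENNReal.ofReal p) P := hG.ae_eq heq
  have horb : ∀ᵐ ω ∂P, ∀ j : ℕ, G (shift^[j] ω) = G' (shift^[j] ω) := by
    rw [ae_all_iff]
    exact fun j => ((hmp.iterate j).quasiMeasurePreserving.ae heq)
  set S : ℕ → Set (ℤ → 𝒴) := fun j => {ω | ((j:ℝ)+1) ^ e ≤ |G' ω|} with hSdef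
  have hSm : ∀ j, MeasurableSet (S j) :=
    fun j => measurableSet_le measurable_const hsm.measurable.abs
  set A : ℕ → Set (ℤ → 𝒴) := fun j => shift^[j] ⁻¹' (S j) with hAdef
  have hPA : ∀ j, P (A j) = P (S j) :=
    fun j => (hmp.iterate j).measure_preimage (hSm j).nullMeasurableSet
  have hpne : (ENNReal.ofReal p) ≠ 0 := by
    simp [ENNReal.ofReal_eq_zero]; linarith
  have hptop : (ENNReal.ofReal p) ≠ ⊤ := ENNReal.ofReal_ne_top
  have hKfin : eLpNorm G' (ENNReal.ofReal p) P ^ p ≠ ⊤ := by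
    refine ENNReal.rpow_ne_top_of_nonneg hp.le (ne_of_lt hG'.2)
  have hmark : ∀ j : ℕ, P (S j)
      ≤ ENNReal.ofReal (((j:ℝ)+1) ^ (-(e*p))) * eLpNorm G' (ENNReal.ofReal p) P ^ p := by
    intro j
    have htpos : (0:ℝ) < ((j:ℝ)+1) ^ e :=
      Real.rpow_pos_of_pos (by linarith [Nat.cast_nonneg (α := ℝ) j]) e
    have hεne : ENNReal.ofReal (((j:ℝ)+1) ^ e) ≠ 0 := by
      simp [ENNReal.ofReal_eq_zero]; linarith
    have hsub : S j ⊆ {ω | ENNReal.ofReal (((j:ℝ)+1) ^ e) ≤ ‖G' ω‖ₑ} := by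
      intro ω hω
      simp only [Set.mem_setOf_eq] at hω ⊢
      rw [← ofReal_norm]
      exact ENNReal.ofReal_le_ofReal (by simpa [Real.norm_eq_abs, hSdef] using hω)
    have h1 := meas_ge_le_mul_pow_eLpNorm_enorm P hpne hptop hG'.aestronglyMeasurable hεne (by simp)
    have h2 : P (S j) ≤ (ENNReal.ofReal (((j:ℝ)+1) ^ e))⁻¹ ^ (ENNReal.ofReal p).toReal
        * eLpNorm G' (ENNReal.ofReal p) P ^ (ENNReal.ofReal p).toReal :=
      le_trans (measure_mono hsub) h1
    rw [ENNReal.toReal_ofReal hp.le] at h2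
    refine le_trans h2 (le_of_eq ?_)
    congr 1
    have hx0 : (0:ℝ) ≤ (j:ℝ)+1 := by linarith [Nat.cast_nonneg (α := ℝ) j]
    have hreal : (((j:ℝ)+1) ^ e)⁻¹ ^ p = ((j:ℝ)+1) ^ (-(e*p)) := by
      rw [← Real.rpow_neg hx0, ← Real.rpow_mul hx0, neg_mul]
    rw [← ENNReal.ofReal_inv_of_pos htpos,
      ENNReal.ofReal_rpow_of_pos (inv_pos.2 htpos), hreal]
  have hsummable : Summable fun j : ℕ => ((j:ℝ)+1) ^ (-(e*p)) := by
    have h0 : Summable fun n : ℕ => (n:ℝ) ^ (-(e*p)) :=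
      Real.summable_nat_rpow.2 (by linarith [mul_comm e p])
    have h1 := (summable_nat_add_iff (f := fun n : ℕ => (n:ℝ) ^ (-(e*p))) 1).2 h0
    refine h1.congr fun n => ?_
    push_cast; ring_nf
  have htsum : (∑' j, P (A j)) ≠ ⊤ := by
    have hb : (∑' j, P (A j))
        ≤ ∑' j : ℕ, ENNReal.ofReal (((j:ℝ)+1) ^ (-(e*p))) * eLpNorm G' (ENNReal.ofReal p) P ^ p := by
      refine ENNReal.tsum_le_tsum fun j => ?_
      rw [hPA j]; exact hmark j
    refine ne_of_lt (lt_of_le_of_lt hb ?_)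
    rw [ENNReal.tsum_mul_right]
    refine ENNReal.mul_lt_top ?_ (lt_of_le_of_ne le_top hKfin)
    rw [← ENNReal.ofReal_tsum_of_nonneg (fun j => Real.rpow_nonneg
      (by linarith [Nat.cast_nonneg (α := ℝ) j]) _) hsummable]
    exact ENNReal.ofReal_lt_top
  have hBC : P (limsup A atTop) = 0 := measure_limsup_atTop_eq_zero htsum
  have hae : ∀ᵐ ω ∂P, ω ∉ limsup A atTop := by
    rw [ae_iff]
    simpa using hBC
  filter_upwards [hae, horb] with ω hω horbω
  rw [mem_limsup_iff_frequently_mem, Filter.not_frequently] at hω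
  have hev : ∀ᶠ j in atTop, |G (shift^[j] ω)| ≤ ((j:ℝ)+1) ^ e := by
    filter_upwards [hω] with j hj
    rw [horbω j]
    simp only [hAdef, Set.mem_preimage, hSdef, Set.mem_setOf_eq, not_le] at hj
    exact le_of_lt hj
  exact exists_const_bound (fun j => abs_nonneg _)
    (fun j => one_le_rpow_cast_succ j e he0) hev



lemma opDist_bddAbove (κ : Kernel X X) [IsMarkovKernel κ] (μ : Measure X)
    [IsProbabilityMeasure μ] :
    BddAbove { r : ℝ | ∃ g : X → ℝ, Measurable g ∧ (∀ x, |g x| ≤ 1) ∧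
      ∃ x : X, r = |(∫ y, g y ∂(κ x)) - ∫ y, g y ∂μ| } := by
  refine ⟨2, fun r hr => ?_⟩
  obtain ⟨g, hgm, hgb, x, rfl⟩ := hr
  calc |(∫ y, g y ∂(κ x)) - ∫ y, g y ∂μ| ≤ |∫ y, g y ∂(κ x)| + |∫ y, g y ∂μ| :=
        abs_sub _ _
  _ ≤ 1 + 1 := add_le_add (abs_integral_le_of_bdd hgm hgb) (abs_integral_le_of_bdd hgm hgb)
  _ = 2 := by norm_num

lemma opDist_nonneg (κ : Kernel X X) [IsMarkovKernel κ] (μ : Measure X)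
    [IsProbabilityMeasure μ] (x : X) : 0 ≤ opDist κ μ := by
  refine le_csSup (opDist_bddAbove κ μ) ?_
  exact ⟨fun _ => 0, measurable_const, fun y => by norm_num, x, by simp⟩

lemma abs_sub_integral_le (κ : Kernel X X) [IsMarkovKernel κ] (μ : Measure X)
    [IsProbabilityMeasure μ] {g : X → ℝ} (hg : Measurable g) {c : ℝ}
    (hc : ∀ y, |g y| ≤ c) (x : X) :
    |(∫ y, g y ∂(κ x)) - ∫ y, g y ∂μ| ≤ c * opDist κ μ := by
  have hc0 : 0 ≤ c := le_trans (abs_nonneg _) (hc x)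
  rcases eq_or_lt_of_le hc0 with hc0' | hcpos
  · have hg0 : ∀ y, g y = 0 := fun y => by
      have := hc y; rw [← hc0'] at this; exact abs_eq_zero.1 (le_antisymm this (abs_nonneg _))
    have : g = fun _ => (0:ℝ) := funext hg0
    subst this
    simp only [integral_const, smul_eq_mul, mul_zero, sub_zero, abs_zero]
    rw [← hc0', zero_mul]
  · set g' : X → ℝ := fun y => c⁻¹ * g y with hg'
    have hg'm : Measurable g' := hg.const_mul c⁻¹
    have hg'b : ∀ y, |g' y| ≤ 1 := fun y => by
      rw [hg', abs_mul, abs_of_pos (inv_pos.2 hcpos)]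
      calc c⁻¹ * |g y| ≤ c⁻¹ * c := by
            have := hc y
            have h2 : (0:ℝ) ≤ c⁻¹ := (inv_pos.2 hcpos).le
            nlinarith
      _ = 1 := inv_mul_cancel₀ (ne_of_gt hcpos)
    have hmem : |(∫ y, g' y ∂(κ x)) - ∫ y, g' y ∂μ| ∈
        { r : ℝ | ∃ g : X → ℝ, Measurable g ∧ (∀ x, |g x| ≤ 1) ∧
          ∃ x : X, r = |(∫ y, g y ∂(κ x)) - ∫ y, g y ∂μ| } :=
      ⟨g', hg'm, hg'b, x, rfl⟩
    have hle : |(∫ y, g' y ∂(κ x)) - ∫ y, g' y ∂μ| ≤ opDist κ μ :=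
      le_csSup (opDist_bddAbove κ μ) hmem
    have hint1 : ∫ y, g' y ∂(κ x) = c⁻¹ * ∫ y, g y ∂(κ x) := integral_const_mul c⁻¹ _
    have hint2 : ∫ y, g' y ∂μ = c⁻¹ * ∫ y, g y ∂μ := integral_const_mul c⁻¹ _
    rw [hint1, hint2, ← mul_sub, abs_mul, abs_of_pos (inv_pos.2 hcpos)] at hle
    calc |(∫ y, g y ∂(κ x)) - ∫ y, g y ∂μ|
        = c * (c⁻¹ * |(∫ y, g y ∂(κ x)) - ∫ y, g y ∂μ|) := by
          field_simp
    _ ≤ c * opDist κ μ := by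
          exact mul_le_mul_of_nonneg_left hle hc0

lemma term_bound (R : 𝒴 → Kernel X X) [∀ y, IsMarkovKernel (R y)]
    (f : (ℤ → 𝒴) × X → ℝ) (hf : Measurable f) (ω : ℤ → 𝒴)
    (μ : (ℤ → 𝒴) → Measure X) [∀ ω', IsProbabilityMeasure (μ ω')]
    (F : (ℤ → 𝒴) → ℝ)
    (hmean : ∀ s : ℕ, ∫ x, f (shift^[s] ω, x) ∂(μ (shift^[s] ω)) = 0)
    (hFb : ∀ (m : ℕ) y, |f (shift^[m] ω, y)| ≤ F (shift^[m] ω))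
    (n k : ℕ) (x : X) :
    |∫ y, f (shift^[n+1+k] ω, y) ∂((Rcomp R (k+1) (shift^[n] ω)) x)|
      ≤ F (shift^[n+1+k] ω)
        * opDist (Rcomp R (k+1) (shift^[n] ω)) (μ (shift^[n+1+k] ω)) := by
  have hgm : Measurable fun y => f (shift^[n+1+k] ω, y) := hf.comp measurable_prodMk_left
  have h1 := abs_sub_integral_le (Rcomp R (k+1) (shift^[n] ω)) (μ (shift^[n+1+k] ω))
    hgm (hFb (n+1+k)) x
  rwa [hmean (n+1+k), sub_zero] at h1

lemma geom_poly_summable (r : ℝ) (hr0 : 0 ≤ r) (hr1 : r < 1) (e : ℝ) (he : 0 ≤ e) :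
    Summable (fun k : ℕ => ((k:ℝ)+2) ^ e * r ^ (k+1)) := by
  rcases eq_or_lt_of_le hr0 with hr0' | hrpos
  · refine Summable.congr (summable_zero) fun k => ?_
    rw [← hr0']
    simp
  obtain ⟨N, hN⟩ := exists_nat_ge e
  have S0 : Summable fun n : ℕ => (n:ℝ) ^ N * r ^ n :=
    summable_pow_mul_geometric_of_norm_lt_one N
      (by rwa [Real.norm_eq_abs, abs_of_pos hrpos])
  have S2 : Summable fun k : ℕ => ((k+2:ℕ):ℝ) ^ N * r ^ (k+2) :=
    (summable_nat_add_iff (f := fun n : ℕ => (n:ℝ) ^ N * r ^ n) 2).2 S0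
  have S3 : Summable fun k : ℕ => ((k:ℝ)+2) ^ (N:ℕ) * r ^ (k+1) := by
    have := S2.mul_left r⁻¹
    refine this.congr fun k => ?_
    have : ((k+2:ℕ):ℝ) = (k:ℝ)+2 := by push_cast; ring
    rw [this]
    rw [pow_succ r (k+1)]
    field_simp
  refine Summable.of_nonneg_of_le (fun k => ?_) (fun k => ?_) S3
  · have : (0:ℝ) ≤ ((k:ℝ)+2) ^ e := Real.rpow_nonneg (by positivity) e
    positivity
  · have hbase : (1:ℝ) ≤ (k:ℝ)+2 := by linarith [Nat.cast_nonneg (α := ℝ) k]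
    have h1 : ((k:ℝ)+2) ^ e ≤ ((k:ℝ)+2) ^ (N:ℝ) :=
      Real.rpow_le_rpow_of_exponent_le hbase hN
    have h2 : ((k:ℝ)+2) ^ (N:ℝ) = ((k:ℝ)+2) ^ (N:ℕ) := Real.rpow_natCast _ N
    have h3 : (0:ℝ) ≤ r ^ (k+1) := pow_nonneg hr0 _
    nlinarith [h1, h2]





/-- **Martingale coboundary decomposition with sup-norm error `O(n^{1/q+ε})`**.
Under the effective rates, for a.e. `ω` and any Markov chain `(X_{ω,j})` with initial
law `μ_ω` and transitions `R_{θ^j ω}`, the sequence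
`M_{ω,n} = f_{θ^n ω}(X_{ω,n}) + χ_{ω,n}(X_{ω,n}) − χ_{ω,n-1}(X_{ω,n-1})` is a
martingale-difference sequence for `σ(X_0,…,X_n)`, and for every `ε > 0` there is a
finite `C_ω` with `|S_n^ω f − Σ_{j=1}^{n-1} M_{ω,j}| ≤ C_ω n^{1/q+ε}` a.s. -/
theorem martingale_coboundary_decomposition
    (P : Measure (ℤ → 𝒴)) [IsProbabilityMeasure P] (herg : Ergodic shift P)
    (R : 𝒴 → Kernel X X) [∀ y, IsMarkovKernel (R y)]
    (hRmeas : ∀ Γ : Set X, MeasurableSet Γ →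
      Measurable fun a : 𝒴 × X => R a.1 a.2 Γ)
    (μ : (ℤ → 𝒴) → Measure X) (hμprob : ∀ ω, IsProbabilityMeasure (μ ω))
    (hμmeas : ∀ Γ : Set X, MeasurableSet Γ → Measurable fun ω => μ ω Γ)
    (hequi : Equivariant P R μ)
    (ρ : ℝ) (hρ : ρ ∈ Set.Ioo (0 : ℝ) 1) (hrates : EffectiveRates P R μ ρ)
    (f : (ℤ → 𝒴) × X → ℝ) (hf : Measurable f)
    (q : ℝ) (hq : 0 < q)
    (F : (ℤ → 𝒴) → ℝ) (hFenv : ∀ ω x, |f (ω, x)| ≤ F ω)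
    (hFq : MemLp F (ENNReal.ofReal q) P)
    (hmean : ∀ᵐ ω ∂P, ∫ x, f (ω, x) ∂(μ ω) = 0) :
    ∀ᵐ ω ∂P, ∀ (Ω' : Type) [m' : MeasurableSpace Ω'] (P' : Measure Ω')
      (Xc : ℕ → Ω' → X),
      IsProbabilityMeasure P' →
      (∀ j, Measurable (Xc j)) →
      (∀ Γ : Set X, MeasurableSet Γ → P' (Xc 0 ⁻¹' Γ) = μ ω Γ) →
      (∀ j : ℕ, ∀ B : Set Ω', MeasurableSet[chainFilt Xc j] B →
        ∀ Γ : Set X, MeasurableSet Γ →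
          P' (B ∩ Xc (j + 1) ⁻¹' Γ) = ∫⁻ a in B, R (ω (j : ℤ)) (Xc j a) Γ ∂P') →
      ((∀ n : ℕ, 1 ≤ n →
          P'[fun a => f (shift^[n] ω, Xc n a) + corrector R f ω n (Xc n a)
              - corrector R f ω (n - 1) (Xc (n - 1) a) | chainFilt Xc (n - 1)]
            =ᵐ[P'] 0) ∧
        ∀ ε : ℝ, 0 < ε → ∃ C : ℝ, ∀ n : ℕ, 1 ≤ n → ∀ᵐ a ∂P',
          |(∑ j ∈ Finset.range n, f (shift^[j] ω, Xc j a)) -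
              ∑ j ∈ Finset.Icc 1 (n - 1),
                (f (shift^[j] ω, Xc j a) + corrector R f ω j (Xc j a)
                  - corrector R f ω (j - 1) (Xc (j - 1) a))| ≤
            C * (n : ℝ) ^ (1 / q + ε)) := by
  classical
  have hmp : MeasurePreserving shift P P := herg.toMeasurePreserving
  have hΩne : Nonempty (ℤ → 𝒴) := by
    by_contra h
    have he : (Set.univ : Set (ℤ → 𝒴)) = ∅ := Set.univ_eq_empty_iff.2 (not_nonempty_iff.1 h)
    have h1 := measure_univ (μ := P); rw [he] at h1; simp at h1
  have hXne : Nonempty X := by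
    obtain ⟨ω0⟩ := hΩne
    by_contra h
    haveI := hμprob ω0
    have he : (Set.univ : Set X) = ∅ := Set.univ_eq_empty_iff.2 (not_nonempty_iff.1 h)
    have h1 := measure_univ (μ := μ ω0); rw [he] at h1; simp at h1
  set x0 : X := Classical.choice hXne with hx0
  -- exponents
  set pp : ℕ → ℝ := fun i => 4 * ((i:ℝ)+1) with hpp
  set eK : ℕ → ℝ := fun i => 1 / (2 * ((i:ℝ)+1)) with heK
  set eF : ℕ → ℝ := fun i => 1/q + 1 / (2 * ((i:ℝ)+1)) with heF
  have hppos : ∀ i, (0:ℝ) < pp i := fun i => by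
    simp only [hpp]; positivity
  have heK0 : ∀ i, 0 ≤ eK i := fun i => by simp only [heK]; positivity
  have heF0 : ∀ i, 0 ≤ eF i := fun i => by simp only [heF]; positivity
  -- choose K_i
  have hrates' : ∀ i : ℕ, ∃ K : (ℤ → 𝒴) → ℝ,
      MemLp K (ENNReal.ofReal (pp i)) P ∧ RateFor P R μ ρ (pp i) K := fun i =>
    hrates (pp i) (by
      have : (0:ℝ) ≤ (i:ℝ) := Nat.cast_nonneg i
      simp only [hpp]; nlinarith)
  choose K hK using hrates'
  -- a.e. facts
  have A1 : ∀ᵐ ω ∂P, ∀ s : ℕ, ∫ x, f (shift^[s] ω, x) ∂(μ (shift^[s] ω)) = 0 := by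
    rw [ae_all_iff]
    exact fun s => (hmp.iterate s).quasiMeasurePreserving.ae hmean
  have A2 : ∀ᵐ ω ∂P, ∀ i j n : ℕ,
      opDist (Rcomp R n (shift^[j] ω)) (μ (shift^[n] (shift^[j] ω)))
        ≤ K i (shift^[j] ω) * ρ ^ ((n:ℝ) / pp i) := by
    rw [ae_all_iff]
    intro i
    rw [ae_all_iff]
    intro j
    filter_upwards [(hmp.iterate j).quasiMeasurePreserving.ae (hK i).2] with ω hω n
    exact le_trans (le_max_right _ _) (hω n)
  have A3 : ∀ᵐ ω ∂P, ∀ i : ℕ, ∃ C, 0 ≤ C ∧ ∀ j : ℕ,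
      |K i (shift^[j] ω)| ≤ C * ((j:ℝ)+1) ^ (eK i) := by
    rw [ae_all_iff]
    intro i
    refine orbit_growth P hmp (K i) (pp i) (hppos i) (hK i).1 (eK i) (heK0 i) ?_
    have hne : ((i:ℝ)+1) ≠ 0 := by positivity
    have : pp i * eK i = 2 := by
      simp only [hpp, heK]; field_simp; ring
    rw [this]; norm_num
  have A4 : ∀ᵐ ω ∂P, ∀ i : ℕ, ∃ C, 0 ≤ C ∧ ∀ j : ℕ,
      |F (shift^[j] ω)| ≤ C * ((j:ℝ)+1) ^ (eF i) := by
    rw [ae_all_iff]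
    intro i
    refine orbit_growth P hmp F q hq hFq (eF i) (heF0 i) ?_
    have h1 : q * eF i = 1 + q * (1 / (2 * ((i:ℝ)+1))) := by
      simp only [heF]
      field_simp
    rw [h1]
    have : 0 < q * (1 / (2 * ((i:ℝ)+1))) := by positivity
    linarith
  filter_upwards [A1, A2, A3, A4] with ω hmean0 hrate hKgrow hFgrow
  intro Ω' m' P' Xc hP' hXc _ hMar
  -- per-i constants
  choose CK hCK using hKgrow
  choose CF hCF using hFgrow
  have hCK0 : ∀ i, 0 ≤ CK i := fun i => (hCK i).1
  have hCKb : ∀ i j, |K i (shift^[j] ω)| ≤ CK i * ((j:ℝ)+1) ^ (eK i) := fun i j => (hCK i).2 j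
  have hCF0 : ∀ i, 0 ≤ CF i := fun i => (hCF i).1
  have hCFb : ∀ i j, |F (shift^[j] ω)| ≤ CF i * ((j:ℝ)+1) ^ (eF i) := fun i j => (hCF i).2 j
  set rr : ℕ → ℝ := fun i => ρ ^ (1 / pp i) with hrr
  have hrpos : ∀ i, 0 < rr i := fun i => Real.rpow_pos_of_pos hρ.1 _
  have hrlt1 : ∀ i, rr i < 1 := fun i =>
    Real.rpow_lt_one hρ.1.le hρ.2 (by positivity)
  have hrhoid : ∀ i k : ℕ, ρ ^ (((k+1:ℕ):ℝ) / pp i) = (rr i) ^ (k+1) := by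
    intro i k
    rw [show ((k+1:ℕ):ℝ) / pp i = (1 / pp i) * ((k+1:ℕ):ℝ) by ring,
      Real.rpow_mul hρ.1.le, Real.rpow_natCast]
  set Cn : ℕ → ℕ → ℝ := fun i n =>
    CF i * CK i * (((n:ℝ)+1) ^ (eF i) * ((n:ℝ)+1) ^ (eK i)) with hCn
  set B : ℕ → ℕ → ℕ → ℝ := fun i n k =>
    Cn i n * (((k:ℝ)+2) ^ (eF i) * (rr i) ^ (k+1)) with hB
  -- the fundamental term bound
  have hbb : ∀ i n k (x : X),
      |∫ y, f (shift^[n+1+k] ω, y) ∂((Rcomp R (k+1) (shift^[n] ω)) x)| ≤ B i n k := by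
    intro i n k x
    haveI := hμprob
    have h1 := term_bound R f hf ω μ F hmean0 (fun m y => hFenv _ y) n k x
    set od := opDist (Rcomp R (k+1) (shift^[n] ω)) (μ (shift^[n+1+k] ω)) with hod
    have hod0 : 0 ≤ od := opDist_nonneg _ _ x0
    have hμidx : shift^[k+1] (shift^[n] ω) = shift^[n+1+k] ω := by
      rw [shift_iterate_add]; congr 1; omega
    have h2 : od ≤ |K i (shift^[n] ω)| * (rr i) ^ (k+1) := by
      have h2a := hrate i n (k+1)
      rw [hμidx] at h2a
      calc od ≤ K i (shift^[n] ω) * ρ ^ (((k+1:ℕ):ℝ) / pp i) := h2a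
      _ ≤ |K i (shift^[n] ω)| * ρ ^ (((k+1:ℕ):ℝ) / pp i) :=
            mul_le_mul_of_nonneg_right (le_abs_self _)
              (Real.rpow_nonneg hρ.1.le _)
      _ = |K i (shift^[n] ω)| * (rr i) ^ (k+1) := by rw [hrhoid i k]
    have h3 : |K i (shift^[n] ω)| ≤ CK i * ((n:ℝ)+1) ^ (eK i) := hCKb i n
    have h4 : F (shift^[n+1+k] ω) ≤ CF i * (((n+1+k:ℕ):ℝ)+1) ^ (eF i) :=
      le_trans (le_abs_self _) (hCFb i (n+1+k))
    have h6 : (((n+1+k:ℕ):ℝ)+1) ^ (eF i) ≤ ((n:ℝ)+1) ^ (eF i) * ((k:ℝ)+2) ^ (eF i) := by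
      have hcast : (((n+1+k:ℕ):ℝ)+1) = (n:ℝ)+(k:ℝ)+2 := by push_cast; ring
      have hle : (n:ℝ)+(k:ℝ)+2 ≤ ((n:ℝ)+1) * ((k:ℝ)+2) := by
        nlinarith [Nat.cast_nonneg (α := ℝ) n, Nat.cast_nonneg (α := ℝ) k]
      calc (((n+1+k:ℕ):ℝ)+1) ^ (eF i) = ((n:ℝ)+(k:ℝ)+2) ^ (eF i) := by rw [hcast]
      _ ≤ (((n:ℝ)+1) * ((k:ℝ)+2)) ^ (eF i) :=
          Real.rpow_le_rpow (by positivity) hle (heF0 i)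
      _ = ((n:ℝ)+1) ^ (eF i) * ((k:ℝ)+2) ^ (eF i) :=
          Real.mul_rpow (by positivity) (by positivity)
    have hF0 : 0 ≤ F (shift^[n+1+k] ω) := le_trans (abs_nonneg _) (hFenv _ x0)
    have hrp : (0:ℝ) ≤ (rr i) ^ (k+1) := pow_nonneg (hrpos i).le _
    have step2 : F (shift^[n+1+k] ω) * od
        ≤ (CF i * (((n+1+k:ℕ):ℝ)+1) ^ (eF i)) * (|K i (shift^[n] ω)| * (rr i) ^ (k+1)) :=
      mul_le_mul h4 h2 hod0
        (mul_nonneg (hCF0 i) (Real.rpow_nonneg (by positivity) _))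
    have step3 : (CF i * (((n+1+k:ℕ):ℝ)+1) ^ (eF i)) * (|K i (shift^[n] ω)| * (rr i) ^ (k+1))
        ≤ (CF i * (((n:ℝ)+1) ^ (eF i) * ((k:ℝ)+2) ^ (eF i)))
          * (|K i (shift^[n] ω)| * (rr i) ^ (k+1)) := by
      refine mul_le_mul_of_nonneg_right ?_ (mul_nonneg (abs_nonneg _) hrp)
      exact mul_le_mul_of_nonneg_left h6 (hCF0 i)
    have step4 : (CF i * (((n:ℝ)+1) ^ (eF i) * ((k:ℝ)+2) ^ (eF i)))
          * (|K i (shift^[n] ω)| * (rr i) ^ (k+1))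
        ≤ (CF i * (((n:ℝ)+1) ^ (eF i) * ((k:ℝ)+2) ^ (eF i)))
          * ((CK i * ((n:ℝ)+1) ^ (eK i)) * (rr i) ^ (k+1)) := by
      refine mul_le_mul_of_nonneg_left ?_ (mul_nonneg (hCF0 i)
        (mul_nonneg (Real.rpow_nonneg (by positivity) _) (Real.rpow_nonneg (by positivity) _)))
      exact mul_le_mul_of_nonneg_right h3 hrp
    have hring : (CF i * (((n:ℝ)+1) ^ (eF i) * ((k:ℝ)+2) ^ (eF i)))
          * ((CK i * ((n:ℝ)+1) ^ (eK i)) * (rr i) ^ (k+1)) = B i n k := by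
      simp only [hB, hCn]; ring
    calc |∫ y, f (shift^[n+1+k] ω, y) ∂((Rcomp R (k+1) (shift^[n] ω)) x)|
        ≤ F (shift^[n+1+k] ω) * od := h1
    _ ≤ _ := step2
    _ ≤ _ := step3
    _ ≤ _ := step4
    _ = B i n k := hring
  have hbsum : ∀ i n, Summable (B i n) := fun i n =>
    (geom_poly_summable (rr i) (hrpos i).le (hrlt1 i) (eF i) (heF0 i)).mul_left (Cn i n)
  -- tsum bound
  set Si : ℕ → ℝ := fun i => ∑' k : ℕ, (((k:ℝ)+2) ^ (eF i) * (rr i) ^ (k+1)) with hSi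
  have hSi0 : ∀ i, 0 ≤ Si i := fun i => tsum_nonneg fun k =>
    mul_nonneg (Real.rpow_nonneg (by positivity) _) (pow_nonneg (hrpos i).le _)
  have htsumB : ∀ i n, ∑' k, B i n k = Cn i n * Si i := fun i n => tsum_mul_left
  -- hquant
  have hquant : ∀ ε : ℝ, 0 < ε → ∃ C : ℝ, 0 ≤ C ∧
      (∀ (n : ℕ) (x : X), |corrector R f ω n x| ≤ C * ((n:ℝ)+1) ^ (1/q + ε)) ∧
      F (shift^[0] ω) ≤ C := by
    intro ε hε
    obtain ⟨i, hi⟩ := exists_nat_one_div_lt hε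
    have hCnn : (0:ℝ) ≤ CF i * CK i * Si i :=
      mul_nonneg (mul_nonneg (hCF0 i) (hCK0 i)) (hSi0 i)
    refine ⟨CF i * CK i * Si i + CF i, by linarith [hCF0 i], fun n x => ?_, ?_⟩
    · have hc1 : |corrector R f ω n x| ≤ ∑' k, B i n k :=
        corrector_abs_le R f ω (B i) (hbb i) (hbsum i) n x
      have hexp : eF i + eK i = 1/q + 1/((i:ℝ)+1) := by
        have hne : ((i:ℝ)+1) ≠ 0 := by positivity
        simp only [heF, heK]; field_simp; ring
      have hc2 : Cn i n = CF i * CK i * ((n:ℝ)+1) ^ (eF i + eK i) := by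
        simp only [hCn]
        rw [← Real.rpow_add (show (0:ℝ) < (n:ℝ)+1 by positivity) (eF i) (eK i)]
      have hmono : ((n:ℝ)+1) ^ (eF i + eK i) ≤ ((n:ℝ)+1) ^ (1/q + ε) := by
        refine Real.rpow_le_rpow_of_exponent_le (by linarith [Nat.cast_nonneg (α := ℝ) n]) ?_
        rw [hexp]
        linarith
      calc |corrector R f ω n x| ≤ ∑' k, B i n k := hc1
      _ = CF i * CK i * ((n:ℝ)+1) ^ (eF i + eK i) * Si i := by rw [htsumB, hc2]
      _ ≤ CF i * CK i * ((n:ℝ)+1) ^ (1/q + ε) * Si i := by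
          have h0 : 0 ≤ CF i * CK i := mul_nonneg (hCF0 i) (hCK0 i)
          nlinarith [hSi0 i, mul_le_mul_of_nonneg_left hmono h0]
      _ = (CF i * CK i * Si i) * ((n:ℝ)+1) ^ (1/q + ε) := by ring
      _ ≤ (CF i * CK i * Si i + CF i) * ((n:ℝ)+1) ^ (1/q + ε) := by
          have : (0:ℝ) ≤ ((n:ℝ)+1) ^ (1/q + ε) := Real.rpow_nonneg (by positivity) _
          nlinarith [hCF0 i]
    · have := hCFb i 0
      have h1 : F (shift^[0] ω) ≤ CF i * ((0:ℝ)+1) ^ (eF i) :=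
        le_trans (le_abs_self _) (by simpa using this)
      rw [show ((0:ℝ)+1) = 1 by ring, Real.one_rpow] at h1
      linarith
  exact main_aux R f hf ω F (fun m y => hFenv _ y) (B 0) (hbb 0) (hbsum 0) q hq hquant
    Ω' P' Xc hP' hXc hMar

end
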